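/- Let $\gamma' \geq 0$ be a real number, let $i \geq 1$ be an integer, let $s \in \mathbb{R}$ and let $d_0,\dots,d_{i-1} \in \mathbb{R}$. Then there exists a unique tuple $(C_0,\dots,C_i) \in \mathbb{R}^{i+1}$ satisfying $\sum_{j=0}^{i} C_j = s$ and, for all $0 \le j \le i-1$, $(j+1)(j+1-\gamma')\,C_{j+1} - (i-j)(i-j+\gamma')\,C_j = d_j$. -/

import Mathlib

open Finset

private def aaK (γ : ℝ) (k : ℕ) : ℝ := ((k:ℝ)+1) * ((k:ℝ)+1-γ)
private def bbK (γ : ℝ) (i k : ℕ) : ℝ := ((i:ℝ)-(k:ℝ)) * ((i:ℝ)-(k:ℝ)+γ)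

private noncomputable def solK (γ : ℝ) (i : ℕ) (dd : ℕ → ℝ) (c : ℝ) : ℕ → ℝ
  | 0 => c
  | m+1 => (aaK γ (i-m-1) * solK γ i dd c m - dd (i-m-1)) / bbK γ i (i-m-1)

private lemma bbK_pos {γ : ℝ} (hγ : 0 ≤ γ) {i k : ℕ} (hk : k < i) : 0 < bbK γ i k := by
  have h1 : (k:ℝ) + 1 ≤ (i:ℝ) := by exact_mod_cast hk
  have h2 : (0:ℝ) < (i:ℝ) - k := by linarith
  exact mul_pos h2 (by linarith)

private lemma solK_affine (γ : ℝ) (i : ℕ) (dd : ℕ → ℝ) (c : ℝ) (m : ℕ) :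
    solK γ i dd c m = c * solK γ i (fun _ => 0) 1 m + solK γ i dd 0 m := by
  induction m with
  | zero => simp [solK]
  | succ m ih =>
    show (aaK γ (i-m-1) * solK γ i dd c m - dd (i-m-1)) / bbK γ i (i-m-1) = _
    rw [ih]
    show _ = c * ((aaK γ (i-m-1) * solK γ i (fun _ => 0) 1 m - 0) / bbK γ i (i-m-1))
        + (aaK γ (i-m-1) * solK γ i dd 0 m - dd (i-m-1)) / bbK γ i (i-m-1)
    rw [mul_div_assoc' c, ← add_div]
    ring_nf

private lemma solK_prod {γ : ℝ} (hγ : 0 ≤ γ) (i : ℕ) :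
    ∀ m, m ≤ i → solK γ i (fun _ => 0) 1 m * ∏ k ∈ Ico (i-m) i, bbK γ i k
      = ∏ k ∈ Ico (i-m) i, aaK γ k := by
  intro m
  induction m with
  | zero => simp [solK]
  | succ m ih =>
    intro hm
    have hm' : m ≤ i := by omega
    have hlt : i - m - 1 < i - m := by omega
    have hlt2 : i - m - 1 < i := by omega
    have hsucc : i - m - 1 + 1 = i - m := by omega
    have hieq : i - (m+1) = i - m - 1 := by omega
    have hb := bbK_pos hγ hlt2
    rw [hieq]
    rw [Finset.prod_eq_prod_Ico_succ_bot (by omega : i - m - 1 < i) (bbK γ i),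
        Finset.prod_eq_prod_Ico_succ_bot (by omega : i - m - 1 < i) (aaK γ)]
    rw [hsucc]
    show (aaK γ (i-m-1) * solK γ i (fun _ => 0) 1 m - 0) / bbK γ i (i-m-1) * _ = _
    rw [sub_zero]
    have h2 := ih hm'
    calc aaK γ (i-m-1) * solK γ i (fun _ => 0) 1 m / bbK γ i (i-m-1) *
          (bbK γ i (i-m-1) * ∏ k ∈ Ico (i-m) i, bbK γ i k)
        = aaK γ (i-m-1) * (solK γ i (fun _ => 0) 1 m * ∏ k ∈ Ico (i-m) i, bbK γ i k)
            * (bbK γ i (i-m-1) / bbK γ i (i-m-1)) := by ring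
      _ = aaK γ (i-m-1) * ∏ k ∈ Ico (i-m) i, aaK γ k := by
            rw [div_self hb.ne', h2, mul_one]

private lemma ff_vandermonde (x y : ℝ) : ∀ n : ℕ,
    ∑ m ∈ range (n+1), (n.choose m : ℝ) * (∏ t ∈ range m, (x - t)) *
      (∏ t ∈ range (n-m), (y - t)) = ∏ t ∈ range n, (x + y - t) := by
  intro n
  induction n with
  | zero => simp
  | succ n ih =>
    rw [Finset.sum_range_succ']
    have hsplit : ∀ m, (((n+1).choose (m+1) : ℝ) * (∏ t ∈ range (m+1), (x - t)) *
          (∏ t ∈ range (n+1-(m+1)), (y - t)))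
        = ((n.choose m : ℝ) * (∏ t ∈ range m, (x - t)) * (∏ t ∈ range (n-m), (y - t))) * (x - m)
          + (n.choose (m+1) : ℝ) * (∏ t ∈ range (m+1), (x - t)) * (∏ t ∈ range (n-m), (y - t)) := by
      intro m
      rw [Nat.choose_succ_succ, Finset.prod_range_succ]
      have : n + 1 - (m+1) = n - m := by omega
      rw [this]
      push_cast
      ring
    rw [Finset.sum_congr rfl (fun m _ => hsplit m), Finset.sum_add_distrib]
    -- handle S2 + f 0
    have hA : (∑ m ∈ range (n+1), (n.choose (m+1) : ℝ) * (∏ t ∈ range (m+1), (x - t)) *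
            (∏ t ∈ range (n-m), (y - t)))
          + ((n+1).choose 0 : ℝ) * (∏ t ∈ range 0, (x - t)) * (∏ t ∈ range (n+1-0), (y - t))
        = ∑ m ∈ range (n+1), ((n.choose m : ℝ) * (∏ t ∈ range m, (x - t)) *
            (∏ t ∈ range (n-m), (y - t))) * (y - ((n - m : ℕ) : ℝ)) := by
      have hg : ∀ m ∈ range (n+1),
          ((n.choose m : ℝ) * (∏ t ∈ range m, (x - t)) * (∏ t ∈ range (n-m), (y - t)))
              * (y - ((n - m : ℕ) : ℝ))
          = (n.choose m : ℝ) * (∏ t ∈ range m, (x - t)) * (∏ t ∈ range ((n-m)+1), (y - t)) := by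
        intro m _
        rw [Finset.prod_range_succ]
        ring
      rw [Finset.sum_congr rfl hg]
      conv_rhs => rw [Finset.sum_range_succ']
      conv_lhs => rw [Finset.sum_range_succ]
      have hn : (n.choose (n+1) : ℝ) = 0 := by simp [Nat.choose_eq_zero_of_lt]
      rw [hn]
      have hterms : ∀ m ∈ range n,
          (n.choose (m+1) : ℝ) * (∏ t ∈ range (m+1), (x - t)) * (∏ t ∈ range (n-m), (y - t))
          = (n.choose (m+1) : ℝ) * (∏ t ∈ range (m+1), (x - t)) * (∏ t ∈ range (n-(m+1)+1), (y - t)) := by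
        intro m hm
        have : n - (m+1) + 1 = n - m := by
          simp only [Finset.mem_range] at hm; omega
        rw [this]
      rw [Finset.sum_congr rfl hterms]
      have h0 : n - 0 + 1 = n + 1 - 0 := by omega
      simp only [Nat.choose_zero_right, Nat.cast_one, Finset.prod_range_zero, h0]
      ring
    rw [add_assoc, hA, ← Finset.sum_add_distrib]
    have hcomb : ∀ m ∈ range (n+1),
        ((n.choose m : ℝ) * (∏ t ∈ range m, (x - t)) * (∏ t ∈ range (n-m), (y - t))) * (x - m)
          + ((n.choose m : ℝ) * (∏ t ∈ range m, (x - t)) * (∏ t ∈ range (n-m), (y - t))) * (y - ((n - m : ℕ) : ℝ))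
        = ((n.choose m : ℝ) * (∏ t ∈ range m, (x - t)) * (∏ t ∈ range (n-m), (y - t))) * (x + y - n) := by
      intro m hm
      have : ((n - m : ℕ) : ℝ) = (n : ℝ) - m := by
        have : m ≤ n := by simp only [Finset.mem_range] at hm; omega
        push_cast [this]; ring
      rw [this]; ring
    rw [Finset.sum_congr rfl hcomb, ← Finset.sum_mul, ih, Finset.prod_range_succ]

private lemma DK_eq (γ : ℝ) (i : ℕ) :
    ∑ j ∈ range (i+1), (∏ k ∈ range j, bbK γ i k) * ∏ k ∈ Ico j i, aaK γ k
      = ((2*i).factorial : ℝ) := by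
  set x : ℝ := γ + i with hx
  set y : ℝ := (i:ℝ) - γ with hy
  have hterm : ∀ j ∈ range (i+1),
      (∏ k ∈ range j, bbK γ i k) * ∏ k ∈ Ico j i, aaK γ k
      = (i.factorial : ℝ) * ((i.choose j : ℝ) * (∏ t ∈ range j, (x - t)) *
          (∏ t ∈ range (i-j), (y - t))) := by
    intro j hj
    have hji : j ≤ i := by simp only [Finset.mem_range] at hj; omega
    -- split bbK product
    have hb : ∏ k ∈ range j, bbK γ i k
        = (i.descFactorial j : ℝ) * ∏ k ∈ range j, (x - k) := by
      have h1 : ∀ k ∈ range j, bbK γ i k = ((i:ℝ) - k) * (x - k) := by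
        intro k _; simp only [bbK, hx]; ring
      rw [Finset.prod_congr rfl h1, Finset.prod_mul_distrib]
      congr 1
      rw [Nat.descFactorial_eq_prod_range, Nat.cast_prod]
      refine Finset.prod_congr rfl fun k hk => ?_
      have : k ≤ i := by simp only [Finset.mem_range] at hk; omega
      rw [Nat.cast_sub this]
    -- split aaK product
    have ha : ∏ k ∈ Ico j i, aaK γ k
        = ((∏ k ∈ Ico j i, (k+1) : ℕ) : ℝ) * ∏ t ∈ range (i-j), (y - t) := by
      have h1 : ∀ k ∈ Ico j i, aaK γ k = ((k:ℝ)+1) * (((k:ℝ)+1) - γ) := by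
        intro k _; simp only [aaK]
      rw [Finset.prod_congr rfl h1, Finset.prod_mul_distrib]
      congr 1
      · rw [Nat.cast_prod]
        refine Finset.prod_congr rfl fun k _ => by rw [Nat.cast_add, Nat.cast_one]
      · rw [Finset.prod_Ico_eq_prod_range, ← Finset.prod_range_reflect]
        refine Finset.prod_congr rfl fun t ht => ?_
        have htn : t < i - j := by simpa using ht
        have hc : ((j + (i - j - 1 - t) : ℕ) : ℝ) = (i:ℝ) - 1 - t := by
          have h5 : ((j + (i - j - 1 - t) : ℕ) : ℝ) + ((t:ℝ) + 1) = i := by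
            exact_mod_cast congrArg Nat.cast (show j + (i - j - 1 - t) + (t + 1) = i by omega)
          linarith
        rw [hy, hc]
        ring
    rw [hb, ha]
    -- nat bookkeeping
    have hnat : i.descFactorial j * (∏ k ∈ Ico j i, (k+1)) = i.choose j * i.factorial := by
      have e1 : ∏ k ∈ Ico j i, (k+1) = ∏ k ∈ Ico (j+1) (i+1), k := by
        rw [Finset.prod_Ico_eq_prod_range, Finset.prod_Ico_eq_prod_range]
        have : i + 1 - (j+1) = i - j := by omega
        rw [this]
        exact Finset.prod_congr rfl fun t _ => by omega
      have e2 : (∏ k ∈ Ico 1 (j+1), k) * ∏ k ∈ Ico (j+1) (i+1), k = ∏ k ∈ Ico 1 (i+1), k :=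
        Finset.prod_Ico_consecutive _ (by omega) (by omega)
      rw [Finset.prod_Ico_id_eq_factorial, Finset.prod_Ico_id_eq_factorial] at e2
      rw [Nat.descFactorial_eq_factorial_mul_choose, e1]
      calc j.factorial * i.choose j * ∏ k ∈ Ico (j+1) (i+1), k
          = i.choose j * (j.factorial * ∏ k ∈ Ico (j+1) (i+1), k) := by ring
        _ = i.choose j * i.factorial := by rw [e2]
    have hcast : ((i.descFactorial j : ℕ) : ℝ) * ((∏ k ∈ Ico j i, (k+1) : ℕ) : ℝ)
        = (i.choose j : ℝ) * (i.factorial : ℝ) := by exact_mod_cast congrArg Nat.cast hnat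
    calc ((i.descFactorial j : ℝ) * ∏ t ∈ range j, (x - t)) *
          (((∏ k ∈ Ico j i, (k+1) : ℕ) : ℝ) * ∏ t ∈ range (i-j), (y - t))
        = ((i.descFactorial j : ℝ) * ((∏ k ∈ Ico j i, (k+1) : ℕ) : ℝ)) *
            ((∏ t ∈ range j, (x - t)) * ∏ t ∈ range (i-j), (y - t)) := by ring
      _ = ((i.choose j : ℝ) * (i.factorial : ℝ)) *
            ((∏ t ∈ range j, (x - t)) * ∏ t ∈ range (i-j), (y - t)) := by rw [hcast]
      _ = (i.factorial : ℝ) * ((i.choose j : ℝ) * (∏ t ∈ range j, (x - t)) *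
            ∏ t ∈ range (i-j), (y - t)) := by ring
  rw [Finset.sum_congr rfl hterm, ← Finset.mul_sum, ff_vandermonde x y i]
  have hxy : ∀ t ∈ range i, x + y - t = ((2*i : ℕ) : ℝ) - t := by
    intro t _; rw [hx, hy]; push_cast; ring
  rw [Finset.prod_congr rfl hxy]
  have hdf : ∏ t ∈ range i, (((2*i : ℕ) : ℝ) - t) = ((2*i).descFactorial i : ℝ) := by
    rw [Nat.descFactorial_eq_prod_range, Nat.cast_prod]
    refine Finset.prod_congr rfl fun t ht => ?_
    have : t ≤ 2*i := by simp only [Finset.mem_range] at ht; omega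
    rw [Nat.cast_sub this]
  rw [hdf]
  have : i.factorial * (2*i).descFactorial i = (2*i).factorial := by
    rw [Nat.descFactorial_eq_factorial_mul_choose]
    have h := Nat.choose_mul_factorial_mul_factorial (show i ≤ 2*i by omega)
    have h2 : 2*i - i = i := by omega
    rw [h2] at h
    calc i.factorial * (i.factorial * (2*i).choose i)
        = (2*i).choose i * i.factorial * i.factorial := by ring
      _ = (2*i).factorial := h
  exact_mod_cast congrArg Nat.cast this

theorem kernel_coefficient_system_unique_solvable
    (γ : ℝ) (hγ : 0 ≤ γ) (i : ℕ) (hi : 1 ≤ i) (s : ℝ) (d : Fin i → ℝ) :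
    ∃! C : Fin (i + 1) → ℝ,
      (∑ j, C j = s) ∧
      ∀ j : Fin i,
        (((j : ℕ) : ℝ) + 1) * (((j : ℕ) : ℝ) + 1 - γ) * C j.succ -
          ((i : ℝ) - ((j : ℕ) : ℝ)) * ((i : ℝ) - ((j : ℕ) : ℝ) + γ) * C j.castSucc = d j := by
  classical
  set dd : ℕ → ℝ := fun k => if h : k < i then d ⟨k, h⟩ else 0 with hdd
  have hbne : ∀ k, k < i → bbK γ i k ≠ 0 := fun k hk => (bbK_pos hγ hk).ne'
  have solK_succ : ∀ (dd' : ℕ → ℝ) (c : ℝ) (m : ℕ), solK γ i dd' c (m+1)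
      = (aaK γ (i-m-1) * solK γ i dd' c m - dd' (i-m-1)) / bbK γ i (i-m-1) :=
    fun _ _ _ => rfl
  -- the backward solution
  set Csol : ℝ → Fin (i+1) → ℝ := fun c j => solK γ i dd c (i - (j:ℕ)) with hCsol
  have key : ∀ (c : ℝ) (j : ℕ), j < i →
      solK γ i dd c (i - j) =
        (aaK γ j * solK γ i dd c (i - (j+1)) - dd j) / bbK γ i j := by
    intro c j hj
    have h1 : i - j = (i - (j+1)) + 1 := by omega
    have h2 : i - (i-(j+1)) - 1 = j := by omega
    rw [h1, solK_succ, h2]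
  -- Csol satisfies the system
  have hsys : ∀ (c : ℝ) (j : Fin i),
      (((j : ℕ) : ℝ) + 1) * (((j : ℕ) : ℝ) + 1 - γ) * Csol c j.succ -
        ((i : ℝ) - ((j : ℕ) : ℝ)) * ((i : ℝ) - ((j : ℕ) : ℝ) + γ) * Csol c j.castSucc
      = d j := by
    intro c j
    have hj : (j:ℕ) < i := j.isLt
    have e1 : Csol c j.castSucc = solK γ i dd c (i - (j:ℕ)) := by
      simp [hCsol, Fin.coe_castSucc]
    have e2 : Csol c j.succ = solK γ i dd c (i - ((j:ℕ)+1)) := by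
      simp [hCsol, Fin.val_succ]
    have hk := key c (j:ℕ) hj
    have hddj : dd (j:ℕ) = d j := by simp [hdd, hj]
    rw [e1, e2, hk]
    show aaK γ (j:ℕ) * solK γ i dd c (i - ((j:ℕ)+1)) -
        bbK γ i (j:ℕ) * ((aaK γ (j:ℕ) * solK γ i dd c (i - ((j:ℕ)+1)) - dd (j:ℕ)) / bbK γ i (j:ℕ)) = d j
    rw [mul_div_cancel₀ _ (hbne _ hj), hddj]
    ring
  -- uniqueness of the backward recursion
  have huniq : ∀ C : Fin (i+1) → ℝ,
      (∀ j : Fin i,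
        (((j : ℕ) : ℝ) + 1) * (((j : ℕ) : ℝ) + 1 - γ) * C j.succ -
          ((i : ℝ) - ((j : ℕ) : ℝ)) * ((i : ℝ) - ((j : ℕ) : ℝ) + γ) * C j.castSucc = d j) →
      ∀ m, (hm : m ≤ i) → C ⟨i - m, by omega⟩ = solK γ i dd (C (Fin.last i)) m := by
    intro C hC m
    induction m with
    | zero =>
      intro _
      have : (⟨i - 0, by omega⟩ : Fin (i+1)) = Fin.last i := by
        apply Fin.ext; simp
      rw [this]; rfl
    | succ m ih =>
      intro hm
      have hm' : m ≤ i := by omega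
      set j : Fin i := ⟨i - m - 1, by omega⟩ with hjdef
      have hCj := hC j
      have ejs : j.succ = (⟨i - m, by omega⟩ : Fin (i+1)) := by
        apply Fin.ext; simp [hjdef]; omega
      have ejc : j.castSucc = (⟨i - (m+1), by omega⟩ : Fin (i+1)) := by
        apply Fin.ext; simp [hjdef]; omega
      have hjv : (j : ℕ) = i - m - 1 := rfl
      rw [ejs, ejc, hjv, ih hm'] at hCj
      have hlt : i - m - 1 < i := by omega
      have hb := hbne _ hlt
      have hddj : dd (i - m - 1) = d j := by simp [hdd, hlt, hjdef]
      rw [solK_succ]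
      rw [eq_div_iff hb]
      have : aaK γ (i-m-1) = (((i - m - 1 : ℕ):ℝ) + 1) * (((i - m - 1 : ℕ):ℝ) + 1 - γ) := rfl
      have hbb : bbK γ i (i-m-1) = ((i:ℝ) - ((i - m - 1 : ℕ):ℝ)) * ((i:ℝ) - ((i - m - 1 : ℕ):ℝ) + γ) := rfl
      rw [hddj]
      rw [this, hbb]
      linarith [hCj]
  -- every solution equals Csol of its last value
  have hall : ∀ C : Fin (i+1) → ℝ,
      (∀ j : Fin i,
        (((j : ℕ) : ℝ) + 1) * (((j : ℕ) : ℝ) + 1 - γ) * C j.succ -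
          ((i : ℝ) - ((j : ℕ) : ℝ)) * ((i : ℝ) - ((j : ℕ) : ℝ) + γ) * C j.castSucc = d j) →
      C = Csol (C (Fin.last i)) := by
    intro C hC
    funext j
    have hj : (j:ℕ) ≤ i := by omega
    have e : j = (⟨i - (i - (j:ℕ)), by omega⟩ : Fin (i+1)) := by
      apply Fin.ext; simp; omega
    rw [e, huniq C hC (i - (j:ℕ)) (by omega)]
    simp only [hCsol]
    congr 1
    omega
  -- affine decomposition of the sum
  set K : ℝ := ∑ j ∈ range (i+1), solK γ i (fun _ => 0) 1 (i - j) with hKdef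
  set L : ℝ := ∑ j ∈ range (i+1), solK γ i dd 0 (i - j) with hLdef
  have hsum : ∀ c : ℝ, (∑ j, Csol c j) = c * K + L := by
    intro c
    rw [show (∑ j, Csol c j) = ∑ j ∈ range (i+1), solK γ i dd c (i - j) from
      Fin.sum_univ_eq_sum_range (fun j => solK γ i dd c (i - j)) (i+1)]
    rw [hKdef, hLdef, Finset.mul_sum, ← Finset.sum_add_distrib]
    exact Finset.sum_congr rfl fun j _ => solK_affine γ i dd c (i - j)
  -- K is nonzero
  have hKB : K * ∏ k ∈ range i, bbK γ i k = ((2*i).factorial : ℝ) := by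
    rw [hKdef, Finset.sum_mul, ← DK_eq γ i]
    refine Finset.sum_congr rfl fun j hj => ?_
    have hji : j ≤ i := by simp only [Finset.mem_range] at hj; omega
    have hsplit : (∏ k ∈ range j, bbK γ i k) * ∏ k ∈ Ico j i, bbK γ i k
        = ∏ k ∈ range i, bbK γ i k := by
      rw [Finset.range_eq_Ico]
      simpa using Finset.prod_Ico_consecutive (bbK γ i) (Nat.zero_le j) hji
    have hij : i - (i - j) = j := by omega
    have hp := solK_prod hγ i (i - j) (by omega)
    rw [hij] at hp
    calc solK γ i (fun _ => 0) 1 (i - j) * ∏ k ∈ range i, bbK γ i k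
        = (∏ k ∈ range j, bbK γ i k) *
            (solK γ i (fun _ => 0) 1 (i - j) * ∏ k ∈ Ico j i, bbK γ i k) := by
          rw [← hsplit]; ring
      _ = (∏ k ∈ range j, bbK γ i k) * ∏ k ∈ Ico j i, aaK γ k := by rw [hp]
  have hK : K ≠ 0 := by
    intro h
    rw [h, zero_mul] at hKB
    have : (0:ℝ) < ((2*i).factorial : ℝ) := by exact_mod_cast (2*i).factorial_pos
    linarith
  -- assemble
  refine ⟨Csol ((s - L)/K), ⟨?_, hsys _⟩, ?_⟩
  · rw [hsum, div_mul_cancel₀ _ hK]; ring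
  · rintro C' ⟨hs', hsys'⟩
    have hC' := hall C' hsys'
    have : C' (Fin.last i) * K + L = s := by rw [← hsum]; rw [← hC']; exact hs'
    have hc : C' (Fin.last i) = (s - L)/K := by
      field_simp
      linarith
    rw [hC', hc]
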